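/- arXiv:1510.01607 — 2 statements merged into one kernel-verified Lean document; each statement's English description precedes it below -/
import Mathlib

section
/- Let B be a Garside shadow in (W,S), w ∈ W, and s ∈ S with s ∉ D_L(w). Then π_B(sw) = π_B(s·π_B(w)). -/
open CoxeterSystem

variable {A W : Type*} [Group W] {M : CoxeterMatrix A}

/-- Right weak order: `u ≤_R v` iff `ℓ(u) + ℓ(u⁻¹v) = ℓ(v)`. -/
def wle (cs : CoxeterSystem M W) (u v : W) : Prop :=
  cs.length u + cs.length (u⁻¹ * v) = cs.length v

/-- A subset of `W` is bounded in the right weak order. -/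
def Bounded (cs : CoxeterSystem M W) (X : Set W) : Prop :=
  ∃ g, ∀ x ∈ X, wle cs x g

/-- `m` is the join (least upper bound) of `X` in the right weak order. -/
def IsJoin (cs : CoxeterSystem M W) (X : Set W) (m : W) : Prop :=
  (∀ x ∈ X, wle cs x m) ∧ ∀ u, (∀ x ∈ X, wle cs x u) → wle cs m u

/-- `v` is a suffix of `w`: `ℓ(w v⁻¹) + ℓ(v) = ℓ(w)`. -/
def IsSuffix (cs : CoxeterSystem M W) (v w : W) : Prop :=
  cs.length (w * v⁻¹) + cs.length v = cs.length w

/-- A Garside shadow: contains the simple reflections, is closed under joins of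
bounded subsets, and is closed under taking suffixes. -/
def IsGarsideShadow (cs : CoxeterSystem M W) (Bs : Set W) : Prop :=
  (∀ i, cs.simple i ∈ Bs) ∧
  (∀ X ⊆ Bs, Bounded cs X → ∀ m, IsJoin cs X m → m ∈ Bs) ∧
  (∀ w ∈ Bs, ∀ v, IsSuffix cs v w → v ∈ Bs)

/-- `π` is the `B`-projection: `π w = ⋁ {g ∈ B | g ≤_R w}`. -/
def IsProj (cs : CoxeterSystem M W) (Bs : Set W) (π : W → W) : Prop :=
  ∀ w, π w ∈ Bs ∧ IsJoin cs {g | g ∈ Bs ∧ wle cs g w} (π w)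

/-- Transitivity of the right weak order. -/
lemma wle_trans' (cs : CoxeterSystem M W) {a b c : W} (h1 : wle cs a b) (h2 : wle cs b c) :
    wle cs a c := by
  unfold wle at *
  have t1 : cs.length (a⁻¹ * c) ≤ cs.length (a⁻¹ * b) + cs.length (b⁻¹ * c) := by
    have := cs.length_mul_le (a⁻¹ * b) (b⁻¹ * c)
    simpa [mul_assoc] using this
  have t2 : cs.length c ≤ cs.length a + cs.length (a⁻¹ * c) := by
    have := cs.length_mul_le a (a⁻¹ * c)
    simpa using this
  omega

/-- If `s ∉ D_L(w)`, then `π_B(sw) = π_B(s·π_B(w))`. -/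
theorem stmt_7 (cs : CoxeterSystem M W) (Bs : Set W) (hB : IsGarsideShadow cs Bs)
    (π : W → W) (hπ : IsProj cs Bs π) (w : W) (i : A)
    (hw : ¬ cs.IsLeftDescent w i) :
    π (cs.simple i * w) = π (cs.simple i * π w) := by
  obtain ⟨hSimp, _hJoin, hSuf⟩ := hB
  set s : W := cs.simple i with hs
  have hsw : cs.length (s * w) = cs.length w + 1 := cs.not_isLeftDescent_iff.mp hw
  set p : W := π w with hp
  set q : W := π (s * p) with hq
  set r : W := π (s * w) with hr
  have hpB := (hπ w).1
  have hpUB := (hπ w).2.1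
  have hpLub := (hπ w).2.2
  have hqUB := (hπ (s * p)).2.1
  have hqLub := (hπ (s * p)).2.2
  have hrB := (hπ (s * w)).1
  have hrUB := (hπ (s * w)).2.1
  have hrLub := (hπ (s * w)).2.2
  -- p ≤ w
  have hpw : wle cs p w := hpLub w (fun x hx => hx.2)
  -- s ∉ D_L(p), i.e. ℓ(sp) = ℓ(p)+1
  have hsp : cs.length (s * p) = cs.length p + 1 := by
    rcases cs.length_simple_mul p i with h | h
    · rw [← hs] at h
      exact h
    · rw [← hs] at h
      exfalso
      have t : cs.length (s * w) ≤ cs.length (s * p) + cs.length (p⁻¹ * w) := by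
        have := cs.length_mul_le (s * p) (p⁻¹ * w)
        simpa [mul_assoc] using this
      unfold wle at hpw
      omega
  -- s ≤_R (s*w)
  have hssw : wle cs s (s * w) := by
    unfold wle
    have e : s⁻¹ * (s * w) = w := by
      rw [hs, cs.inv_simple, ← mul_assoc, cs.simple_mul_simple_self, one_mul]
    rw [e, hs, cs.length_simple, ← hs, hsw]
    omega
  -- r ≤_R (s*w)
  have hrsw : wle cs r (s * w) := hrLub (s * w) (fun x hx => hx.2)
  -- s ≤_R r, so ℓ(sr) = ℓ(r) - 1
  have hsr : wle cs s r := hrUB s ⟨hSimp i, hssw⟩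
  have hsrlen : 1 + cs.length (s * r) = cs.length r := by
    unfold wle at hsr
    rw [hs, cs.length_simple, cs.inv_simple, ← hs] at hsr
    exact hsr
  -- s*r ∈ B, since it is a suffix of r
  have hsrB : s * r ∈ Bs := by
    apply hSuf r hrB (s * r)
    unfold IsSuffix
    have e : r * (s * r)⁻¹ = s := by
      rw [mul_inv_rev, ← mul_assoc, mul_inv_cancel, one_mul, hs, cs.inv_simple]
    rw [e, hs, cs.length_simple, ← hs]
    omega
  -- s*r ≤_R w
  have hsrw : wle cs (s * r) w := by
    unfold wle
    have e : (s * r)⁻¹ * w = r⁻¹ * (s * w) := by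
      rw [mul_inv_rev, hs, cs.inv_simple, mul_assoc, ← hs]
    rw [e]
    unfold wle at hrsw
    omega
  -- hence s*r ≤_R p
  have hsrp : wle cs (s * r) p := hpUB (s * r) ⟨hsrB, hsrw⟩
  -- hence r ≤_R s*p
  have hrsp : wle cs r (s * p) := by
    unfold wle
    have e : r⁻¹ * (s * p) = (s * r)⁻¹ * p := by
      rw [mul_inv_rev, hs, cs.inv_simple, mul_assoc, ← hs]
    unfold wle at hsrp
    rw [e, hsp]
    omega
  -- hence r ≤_R q
  have hrq : wle cs r q := hqUB r ⟨hrB, hrsp⟩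
  -- s*p ≤_R s*w
  have hspsw : wle cs (s * p) (s * w) := by
    unfold wle
    have e : (s * p)⁻¹ * (s * w) = p⁻¹ * w := by
      rw [mul_inv_rev, hs, cs.inv_simple, mul_assoc, ← mul_assoc s,
        cs.simple_mul_simple_self, one_mul]
    rw [e, hsp, hsw]
    unfold wle at hpw
    omega
  -- q ≤_R r
  have hqr : wle cs q r := hqLub r (fun x hx => hrUB x ⟨hx.1, wle_trans' cs hx.2 hspsw⟩)
  -- antisymmetry
  unfold wle at hrq hqr
  have hz : cs.length (q⁻¹ * r) = 0 := by omega
  have : q⁻¹ * r = 1 := cs.length_eq_zero_iff.mp hz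
  have : q = r := by
    have := inv_mul_eq_one.mp this
    exact this
  exact this.symm
end

section
/- Let w = s_k ⋯ s_1 be a reduced word in a Coxeter system (W,S) and B a Garside shadow. Then π_B(w) = π_B(s_k · π_B(s_{k-1} · π_B(⋯ s_2 · π_B(s_1)))), i.e., the B-projection of w can be computed by iterated projection along any reduced word. -/
open CoxeterSystem

variable {A W : Type*} [Group W] {M : CoxeterMatrix A}

section Aux

variable (cs : CoxeterSystem M W)

private lemma wle_trans'_s9 {u v w : W} (h1 : wle cs u v) (h2 : wle cs v w) : wle cs u w := by
  unfold wle at *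
  have e : u⁻¹ * w = (u⁻¹ * v) * (v⁻¹ * w) := by group
  have t1 : cs.length (u⁻¹ * w) ≤ cs.length (u⁻¹ * v) + cs.length (v⁻¹ * w) := by
    rw [e]; exact cs.length_mul_le _ _
  have t2 : cs.length w ≤ cs.length u + cs.length (u⁻¹ * w) := by
    have := cs.length_mul_le u (u⁻¹ * w)
    simpa [mul_assoc] using this
  omega

private lemma wle_antisymm' {u v : W} (h1 : wle cs u v) (h2 : wle cs v u) : u = v := by
  unfold wle at *
  have t2 : cs.length v ≤ cs.length u + cs.length (u⁻¹ * v) := by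
    have := cs.length_mul_le u (u⁻¹ * v)
    simpa [mul_assoc] using this
  have hz : cs.length (u⁻¹ * v) = 0 := by omega
  have := cs.length_eq_zero_iff.mp hz
  have : v = u * 1 := by rw [← this]; group
  simpa using this.symm

variable {Bs : Set W} {π : W → W}

private lemma proj_le (hπ : IsProj cs Bs π) (w : W) : wle cs (π w) w :=
  (hπ w).2.2 w (fun _ hb => hb.2)

private lemma proj_ub (hπ : IsProj cs Bs π) {b w : W} (hb : b ∈ Bs) (hbw : wle cs b w) : wle cs b (π w) :=
  (hπ w).2.1 b ⟨hb, hbw⟩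

private lemma proj_mono (hπ : IsProj cs Bs π) {w w' : W} (h : wle cs w w') : wle cs (π w) (π w') :=
  (hπ w).2.2 (π w') (fun b hb => proj_ub cs hπ hb.1 (wle_trans'_s9 cs hb.2 h))

private lemma key_step (hπ : IsProj cs Bs π) (hB : IsGarsideShadow cs Bs) {i : A} {w : W}
    (h : cs.length (cs.simple i * w) = cs.length w + 1) :
    π (cs.simple i * w) = π (cs.simple i * π w) := by
  set s := cs.simple i with hs
  have hls : cs.length s = 1 := cs.length_simple i
  have hsinv : s⁻¹ = s := cs.inv_simple i
  -- step 2: ℓ(s * π w) = ℓ(π w) + 1 and wle (s * π w) (s * w)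
  have hpw : wle cs (π w) w := proj_le cs hπ w
  set x := (π w)⁻¹ * w with hx
  have hxlen : cs.length (π w) + cs.length x = cs.length w := hpw
  have e1 : s * w = (s * π w) * x := by rw [hx]; group
  have t1 : cs.length (s * w) ≤ cs.length (s * π w) + cs.length x := by
    rw [e1]; exact cs.length_mul_le _ _
  have t2 : cs.length (s * π w) ≤ 1 + cs.length (π w) := by
    have := cs.length_mul_le s (π w); omega
  have hspw : cs.length (s * π w) = cs.length (π w) + 1 := by omega
  have hwle2 : wle cs (s * π w) (s * w) := by
    unfold wle
    have e2 : (s * π w)⁻¹ * (s * w) = x := by rw [hx]; group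
    rw [e2, hspw]; omega
  -- d1 : π (s * π w) ≤ π (s * w)
  have d1 : wle cs (π (s * π w)) (π (s * w)) := proj_mono cs hπ hwle2
  -- step 4: s ≤ π (s * w)
  have hssw : wle cs s (s * w) := by
    unfold wle
    have e3 : s⁻¹ * (s * w) = w := by group
    rw [e3, hls]; omega
  have hsb : wle cs s (π (s * w)) := proj_ub cs hπ (hB.1 i) hssw
  set b := π (s * w) with hb
  have hbB : b ∈ Bs := (hπ (s * w)).1
  set b' := s * b with hb'
  have hlb : cs.length b = cs.length b' + 1 := by
    have := hsb
    unfold wle at this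
    have e4 : s⁻¹ * b = b' := by rw [hb', hsinv]
    rw [e4, hls] at this; omega
  -- step 6: b' ∈ Bs
  have hb'B : b' ∈ Bs := by
    apply hB.2.2 b hbB b'
    unfold IsSuffix
    have e5 : b * b'⁻¹ = s := by rw [hb', mul_inv_rev, hsinv, mul_inv_cancel_left]
    rw [e5, hls]; omega
  -- step 7: b' ≤ w
  have hbsw : wle cs b (s * w) := proj_le cs hπ (s * w)
  have hb'w : wle cs b' w := by
    unfold wle at hbsw ⊢
    have e6 : b⁻¹ * (s * w) = b'⁻¹ * w := by rw [hb', mul_inv_rev, hsinv, mul_assoc]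
    rw [e6] at hbsw; omega
  -- step 8: b' ≤ π w
  have hb'pw : wle cs b' (π w) := proj_ub cs hπ hb'B hb'w
  -- step 9: b ≤ s * π w
  have hbspw : wle cs b (s * π w) := by
    unfold wle at hb'pw ⊢
    have e7 : b⁻¹ * (s * π w) = b'⁻¹ * π w := by rw [hb', mul_inv_rev, hsinv, mul_assoc]
    rw [e7, hspw]; omega
  -- step 10-11
  have d2 : wle cs b (π (s * π w)) := proj_ub cs hπ hbB hbspw
  exact wle_antisymm' cs d2 d1

end Aux

/-- For a reduced word `w = s_k ⋯ s_1`, the `B`-projection of `w` is computed by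
iterated projection: `π_B(w) = π_B(s_k · π_B(s_{k-1} · π_B(⋯ s_2 · π_B(s_1))))`. -/
theorem stmt_9 (cs : CoxeterSystem M W) (Bs : Set W) (hB : IsGarsideShadow cs Bs)
    (π : W → W) (hπ : IsProj cs Bs π) (ω : List A) (hω : cs.IsReduced ω) :
    π (cs.wordProd ω) = ω.foldr (fun i acc => π (cs.simple i * acc)) 1 := by
  induction ω with
  | nil =>
    simp only [cs.wordProd_nil, List.foldr_nil]
    have h1 : wle cs (π 1) 1 := proj_le cs hπ 1
    unfold wle at h1
    simp only [CoxeterSystem.length_one] at h1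
    exact cs.length_eq_zero_iff.mp (by omega)
  | cons i ω' ih =>
    have hred : cs.length (cs.wordProd (i :: ω')) = ω'.length + 1 := by
      simpa [CoxeterSystem.IsReduced] using hω
    rw [cs.wordProd_cons] at hred
    have hle1 : cs.length (cs.wordProd ω') ≤ ω'.length := cs.length_wordProd_le ω'
    have hle2 : cs.length (cs.simple i * cs.wordProd ω') ≤
        1 + cs.length (cs.wordProd ω') := by
      have := cs.length_mul_le (cs.simple i) (cs.wordProd ω')
      rw [cs.length_simple] at this; exact this
    have hω' : cs.IsReduced ω' := by unfold CoxeterSystem.IsReduced; omega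
    have h : cs.length (cs.simple i * cs.wordProd ω') =
        cs.length (cs.wordProd ω') + 1 := by omega
    rw [cs.wordProd_cons, List.foldr_cons, ← ih hω',
      key_step cs hπ hB h]
end
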